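/- Let f be a monotone submodular function with f(∅)=0 and curvature c_f, and let ε ∈ (0,1). Define ℓ(S) = (1-ε/2)·∑_{e∈S}(f(E)-f(E\{e})) and g(S) = f(S) - ℓ(S). Then g is a nonnegative monotone submodular function. -/

import Mathlib

open Finset

private lemma marg_le {E : Type*} [Fintype E] [DecidableEq E]
    (f : Finset E → ℝ)
    (hsub : ∀ S T : Finset E, f S + f T ≥ f (S ∩ T) + f (S ∪ T))
    (a : E) (B : Finset E) (ha : a ∉ B) :
    f Finset.univ - f (Finset.univ.erase a) ≤ f (insert a B) - f B := by
  have h := hsub (Finset.univ.erase a) (insert a B)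
  have hinter : (Finset.univ.erase a) ∩ (insert a B) = B := by
    ext x
    simp only [Finset.mem_inter, Finset.mem_erase, Finset.mem_insert, Finset.mem_univ,
      and_true]
    constructor
    · rintro ⟨hx, hx2 | hx2⟩
      · exact absurd hx2 hx
      · exact hx2
    · intro hx
      exact ⟨fun h => ha (h ▸ hx), Or.inr hx⟩
  have hunion : (Finset.univ.erase a) ∪ (insert a B) = Finset.univ := by
    apply Finset.eq_univ_of_forall
    intro x
    by_cases hx : x = a
    · simp [hx]
    · simp [hx]
  rw [hinter, hunion] at h
  linarith

private lemma sum_marg_le {E : Type*} [Fintype E] [DecidableEq E]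
    (f : Finset E → ℝ)
    (hsub : ∀ S T : Finset E, f S + f T ≥ f (S ∩ T) + f (S ∪ T))
    (S : Finset E) :
    ∀ D : Finset E, Disjoint D S →
      ∑ e ∈ D, (f Finset.univ - f (Finset.univ.erase e)) ≤ f (S ∪ D) - f S := by
  intro D
  induction D using Finset.induction_on with
  | empty => simp
  | @insert a D' ha ih =>
    intro hdisj
    have hdisj' : Disjoint D' S := (Finset.disjoint_insert_left.mp hdisj).2
    have haS : a ∉ S := (Finset.disjoint_insert_left.mp hdisj).1
    have haSD : a ∉ S ∪ D' := by simp [haS, ha]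
    have h1 := marg_le f hsub a (S ∪ D') haSD
    have h2 := ih hdisj'
    rw [Finset.sum_insert ha]
    have : S ∪ insert a D' = insert a (S ∪ D') := by
      ext x; simp [or_comm, or_left_comm]
    rw [this]
    linarith

theorem g_nonneg_monotone_submodular
    {E : Type*} [Fintype E] [DecidableEq E] [Nonempty E]
    (f : Finset E → ℝ)
    (hmono : ∀ S T : Finset E, S ⊆ T → f S ≤ f T)
    (hsub : ∀ S T : Finset E, f S + f T ≥ f (S ∩ T) + f (S ∪ T))
    (hempty : f ∅ = 0)
    (hpos : ∀ e : E, 0 < f {e})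
    (ε : ℝ) (hε : ε ∈ Set.Ioo (0:ℝ) 1)
    (ℓ g : Finset E → ℝ)
    (hℓ : ∀ S : Finset E,
      ℓ S = (1 - ε/2) * ∑ e ∈ S, (f Finset.univ - f (Finset.univ.erase e)))
    (hg : ∀ S : Finset E, g S = f S - ℓ S) :
    (∀ S : Finset E, 0 ≤ g S) ∧
    (∀ S T : Finset E, S ⊆ T → g S ≤ g T) ∧
    (∀ S T : Finset E, g S + g T ≥ g (S ∩ T) + g (S ∪ T)) := by
  obtain ⟨hε0, hε1⟩ := hε
  have hc : (0:ℝ) < 1 - ε/2 := by linarith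
  have hc1 : 1 - ε/2 ≤ 1 := by linarith
  have hmarg_nonneg : ∀ e : E, 0 ≤ f Finset.univ - f (Finset.univ.erase e) := by
    intro e
    have := hmono (Finset.univ.erase e) Finset.univ (Finset.erase_subset _ _)
    linarith
  have hmonog : ∀ S T : Finset E, S ⊆ T → g S ≤ g T := by
    intro S T hST
    have hsplit : ∑ e ∈ T, (f Finset.univ - f (Finset.univ.erase e)) =
        ∑ e ∈ S, (f Finset.univ - f (Finset.univ.erase e)) +
        ∑ e ∈ T \ S, (f Finset.univ - f (Finset.univ.erase e)) := by
      rw [← Finset.sum_union (Finset.disjoint_sdiff), Finset.union_sdiff_of_subset hST]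
    have hD : Disjoint (T \ S) S := Finset.sdiff_disjoint
    have hkey := sum_marg_le f hsub S (T \ S) hD
    rw [Finset.union_sdiff_of_subset hST] at hkey
    have hsum_nonneg : 0 ≤ ∑ e ∈ T \ S, (f Finset.univ - f (Finset.univ.erase e)) :=
      Finset.sum_nonneg fun e _ => hmarg_nonneg e
    rw [hg S, hg T, hℓ S, hℓ T, hsplit]
    nlinarith
  refine ⟨?_, hmonog, ?_⟩
  · intro S
    have h0 : g ∅ = 0 := by rw [hg, hℓ, hempty]; simp
    have := hmonog ∅ S (Finset.empty_subset S)
    linarith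
  · intro S T
    have hsum : ∑ e ∈ S ∪ T, (f Finset.univ - f (Finset.univ.erase e)) +
        ∑ e ∈ S ∩ T, (f Finset.univ - f (Finset.univ.erase e)) =
        ∑ e ∈ S, (f Finset.univ - f (Finset.univ.erase e)) +
        ∑ e ∈ T, (f Finset.univ - f (Finset.univ.erase e)) :=
      Finset.sum_union_inter
    have := hsub S T
    rw [hg S, hg T, hg (S ∩ T), hg (S ∪ T), hℓ S, hℓ T, hℓ (S ∩ T), hℓ (S ∪ T)]
    nlinarith
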